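/- Let Γ ⊆ ℝⁿ be a closed convex cone that is invariant under permutations of the coordinates, and let f : ℝⁿ → ℝ be invariant under permutations of the coordinates, concave on Γ, and nonnegative on Γ. Let A and B be n × n Hermitian complex matrices such that, for every t ≥ 0, the vector of eigenvalues of A + tB lies in Γ. If the function g(t) := f(vector of eigenvalues of A + tB) has a derivative d at t = 0 (derivative from within [0, ∞)), then d ≥ 0. -/

import Mathlib

open Matrix

section Aux

variable {n : ℕ}

lemma permMatrix_mulVec_aux (σ : Equiv.Perm (Fin n)) (μ : Fin n → ℝ) :
    (σ.permMatrix ℝ) *ᵥ μ = μ ∘ σ := by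
  ext i
  simp [mulVec, dotProduct, PEquiv.toMatrix_apply, Equiv.toPEquiv_apply]

/-- Doubly stochastic mixing stays in the symmetric convex set and does not
decrease a symmetric concave function. -/
lemma dsMix_aux (Γ : Set (Fin n → ℝ)) (f : (Fin n → ℝ) → ℝ)
    (hconvex : Convex ℝ Γ)
    (hΓperm : ∀ (σ : Equiv.Perm (Fin n)) (x : Fin n → ℝ), x ∈ Γ → x ∘ σ ∈ Γ)
    (hfperm : ∀ (σ : Equiv.Perm (Fin n)) (x : Fin n → ℝ), f (x ∘ σ) = f x)
    (hconcave : ConcaveOn ℝ Γ f)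
    {D : Matrix (Fin n) (Fin n) ℝ} (hD : D ∈ doublyStochastic ℝ (Fin n))
    {μ : Fin n → ℝ} (hμ : μ ∈ Γ) :
    D *ᵥ μ ∈ Γ ∧ f μ ≤ f (D *ᵥ μ) := by
  obtain ⟨w, hw0, hw1, hwD⟩ := exists_eq_sum_perm_of_mem_doublyStochastic hD
  have hDv : D *ᵥ μ = ∑ σ : Equiv.Perm (Fin n), w σ • (μ ∘ σ) := by
    rw [← hwD]
    ext i
    simp only [mulVec, dotProduct, Finset.sum_apply, Matrix.sum_apply, Finset.sum_mul,
      Pi.smul_apply, smul_eq_mul, Matrix.smul_apply]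
    rw [Finset.sum_comm]
    refine Finset.sum_congr rfl fun σ _ => ?_
    have := congrFun (permMatrix_mulVec_aux σ μ) i
    simp only [mulVec, dotProduct, Function.comp_apply] at this
    rw [Function.comp_apply, ← this, Finset.mul_sum]
    simp [mul_assoc]
  constructor
  · rw [hDv]
    exact hconvex.sum_mem (fun σ _ => hw0 σ) hw1 (fun σ _ => hΓperm σ μ hμ)
  · rw [hDv]
    have h := hconcave.le_map_sum (t := Finset.univ) (w := w) (p := fun σ => μ ∘ σ)
      (fun σ _ => hw0 σ) hw1 (fun σ _ => hΓperm σ μ hμ)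
    calc f μ = ∑ σ : Equiv.Perm (Fin n), w σ • f (μ ∘ σ) := by
          simp only [hfperm, smul_eq_mul, ← Finset.sum_mul, hw1, one_mul]
      _ ≤ _ := h

/-- The real diagonal of `star U * M * U`, for `M` Hermitian and `U` unitary,
is a doubly stochastic mixture of the eigenvalues of `M`. -/
lemma diag_re_eq_ds_aux (M : Matrix (Fin n) (Fin n) ℂ) (hM : M.IsHermitian)
    (U : Matrix.unitaryGroup (Fin n) ℂ) :
    ∃ D ∈ doublyStochastic ℝ (Fin n),
      (fun i => ((star (U : Matrix (Fin n) (Fin n) ℂ) * M * (U : Matrix (Fin n) (Fin n) ℂ)) i i).re)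
        = D *ᵥ hM.eigenvalues := by
  set V : Matrix (Fin n) (Fin n) ℂ := (hM.eigenvectorUnitary : Matrix (Fin n) (Fin n) ℂ) with hVdef
  set W : Matrix (Fin n) (Fin n) ℂ := star V * (U : Matrix (Fin n) (Fin n) ℂ) with hWdef
  have hV : V ∈ Matrix.unitaryGroup (Fin n) ℂ := hM.eigenvectorUnitary.2
  have hU : (U : Matrix (Fin n) (Fin n) ℂ) ∈ Matrix.unitaryGroup (Fin n) ℂ := U.2
  have hVV : V * star V = 1 := mem_unitaryGroup_iff.mp hV
  have hVV' : star V * V = 1 := mem_unitaryGroup_iff'.mp hV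
  have hUU : (U : Matrix (Fin n) (Fin n) ℂ) * star (U : Matrix (Fin n) (Fin n) ℂ) = 1 :=
    mem_unitaryGroup_iff.mp hU
  have hUU' : star (U : Matrix (Fin n) (Fin n) ℂ) * (U : Matrix (Fin n) (Fin n) ℂ) = 1 :=
    mem_unitaryGroup_iff'.mp hU
  have hWW : star W * W = 1 := by
    calc star W * W
        = star (U : Matrix (Fin n) (Fin n) ℂ) * ((V * star V) *
            (U : Matrix (Fin n) (Fin n) ℂ)) := by
          rw [hWdef]; simp only [Matrix.star_mul, star_star, mul_assoc]
      _ = 1 := by rw [hVV, one_mul, hUU']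
  have hWW' : W * star W = 1 := by
    calc W * star W
        = star V * (((U : Matrix (Fin n) (Fin n) ℂ) * star (U : Matrix (Fin n) (Fin n) ℂ)) * V) := by
          rw [hWdef]; simp only [Matrix.star_mul, star_star, mul_assoc]
      _ = 1 := by rw [hUU, one_mul, hVV']
  have hform : star (U : Matrix (Fin n) (Fin n) ℂ) * M * (U : Matrix (Fin n) (Fin n) ℂ)
      = star W * diagonal (RCLike.ofReal ∘ hM.eigenvalues) * W := by
    conv_lhs => rw [hM.spectral_theorem, Unitary.conjStarAlgAut_apply]
    rw [hWdef]
    simp only [Matrix.star_mul, star_star]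
    simp only [← hVdef, Matrix.mul_assoc]
  have hentry : ∀ i, (star (U : Matrix (Fin n) (Fin n) ℂ) * M * (U : Matrix (Fin n) (Fin n) ℂ)) i i
      = ((∑ j, Complex.normSq (W j i) * hM.eigenvalues j : ℝ) : ℂ) := by
    intro i
    rw [hform, Matrix.mul_apply]
    push_cast
    refine Finset.sum_congr rfl fun j _ => ?_
    rw [Matrix.mul_diagonal, Matrix.star_apply]
    have : (starRingEnd ℂ) (W j i) * W j i = (Complex.normSq (W j i) : ℂ) :=
      Complex.normSq_eq_conj_mul_self.symm
    calc star (W j i) * (RCLike.ofReal (hM.eigenvalues j)) * W j i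
        = ((starRingEnd ℂ) (W j i) * W j i) * ((hM.eigenvalues j : ℝ) : ℂ) := by
          show (starRingEnd ℂ) (W j i) * ((hM.eigenvalues j : ℝ) : ℂ) * W j i = _; ring
      _ = (Complex.normSq (W j i) : ℂ) * ((hM.eigenvalues j : ℝ) : ℂ) := by rw [this]
  refine ⟨fun i j => Complex.normSq (W j i), ?_, ?_⟩
  · apply mem_doublyStochastic_iff_sum.mpr
    refine ⟨fun i j => Complex.normSq_nonneg _, fun i => ?_, fun j => ?_⟩
    · have h := congrArg (fun X : Matrix (Fin n) (Fin n) ℂ => X i i) hWW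
      simp only [Matrix.mul_apply, Matrix.one_apply_eq, Matrix.star_apply] at h
      have h2 : ((∑ j, Complex.normSq (W j i) : ℝ) : ℂ) = 1 := by
        rw [← h]
        push_cast
        refine Finset.sum_congr rfl fun j _ => ?_
        exact Complex.normSq_eq_conj_mul_self
      exact_mod_cast h2
    · have h := congrArg (fun X : Matrix (Fin n) (Fin n) ℂ => X j j) hWW'
      simp only [Matrix.mul_apply, Matrix.one_apply_eq, Matrix.star_apply] at h
      have h2 : ((∑ i, Complex.normSq (W j i) : ℝ) : ℂ) = 1 := by
        rw [← h]
        push_cast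
        refine Finset.sum_congr rfl fun i _ => ?_
        rw [mul_comm]
        exact Complex.normSq_eq_conj_mul_self
      exact_mod_cast h2
  · funext i
    rw [hentry i]
    simp only [Complex.ofReal_re, mulVec, dotProduct]

end Aux

/-- Along the Hermitian line `A + tB`, if the admissibility condition holds for
all `t ≥ 0`, the one-sided derivative at `t = 0` of `t ↦ f(eigenvalues)` is
nonnegative, for `f` symmetric, concave and nonnegative on a symmetric cone. -/
theorem deriv_eigenvalue_functional_nonneg
    {n : ℕ} (Γ : Set (Fin n → ℝ)) (f : (Fin n → ℝ) → ℝ)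
    (hclosed : IsClosed Γ)
    (hconvex : Convex ℝ Γ)
    (hcone : ∀ t : ℝ, 0 < t → ∀ x ∈ Γ, t • x ∈ Γ)
    (hΓperm : ∀ (σ : Equiv.Perm (Fin n)) (x : Fin n → ℝ), x ∈ Γ → x ∘ σ ∈ Γ)
    (hfperm : ∀ (σ : Equiv.Perm (Fin n)) (x : Fin n → ℝ), f (x ∘ σ) = f x)
    (hconcave : ConcaveOn ℝ Γ f)
    (hnonneg : ∀ x ∈ Γ, 0 ≤ f x)
    (A B : Matrix (Fin n) (Fin n) ℂ)
    (hA : A.IsHermitian) (hB : B.IsHermitian)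
    (hHerm : ∀ t : ℝ, (A + (t : ℂ) • B).IsHermitian)
    (hadm : ∀ t : ℝ, 0 ≤ t → (hHerm t).eigenvalues ∈ Γ)
    (d : ℝ)
    (hderiv : HasDerivWithinAt (fun t : ℝ => f ((hHerm t).eigenvalues)) d
      (Set.Ici (0 : ℝ)) 0) :
    0 ≤ d := by
  set g : ℝ → ℝ := fun t => f ((hHerm t).eigenvalues) with hgdef
  have hg0 : 0 ≤ g 0 := hnonneg _ (hadm 0 le_rfl)
  -- the key concavity-type inequality along the line
  have hmain : ∀ T : ℝ, 0 < T → ∀ t : ℝ, 0 < t → t ≤ T →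
      -(t / T) * g 0 ≤ g t - g 0 := by
    intro T hT t ht htT
    set s : ℝ := t / T with hsdef
    have hs0 : 0 ≤ s := div_nonneg ht.le hT.le
    have hs1 : s ≤ 1 := (div_le_one hT).mpr htT
    have hst : s * T = t := div_mul_cancel₀ t hT.ne'
    set U := (hHerm t).eigenvectorUnitary with hUdef
    obtain ⟨D0, hD0, hv0⟩ := diag_re_eq_ds_aux (A + ((0 : ℝ) : ℂ) • B) (hHerm 0) U
    obtain ⟨D1, hD1, hv1⟩ := diag_re_eq_ds_aux (A + ((T : ℝ) : ℂ) • B) (hHerm T) U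
    set v0 : Fin n → ℝ := D0 *ᵥ (hHerm 0).eigenvalues with hv0def
    set v1 : Fin n → ℝ := D1 *ᵥ (hHerm T).eigenvalues with hv1def
    obtain ⟨hv0mem, hfv0⟩ := dsMix_aux Γ f hconvex hΓperm hfperm hconcave hD0 (hadm 0 le_rfl)
    obtain ⟨hv1mem, hfv1⟩ := dsMix_aux Γ f hconvex hΓperm hfperm hconcave hD1 (hadm T hT.le)
    -- the matrix convex combination
    have hmat : A + ((t : ℝ) : ℂ) • B
        = (((1 - s : ℝ) : ℂ)) • (A + ((0 : ℝ) : ℂ) • B)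
          + (((s : ℝ) : ℂ)) • (A + ((T : ℝ) : ℂ) • B) := by
      ext i j
      simp only [Matrix.add_apply, Matrix.smul_apply, smul_eq_mul]
      rw [← hst]
      push_cast
      ring
    -- the eigenvalue vector of `A + tB` is the corresponding convex combination
    have hlam : (hHerm t).eigenvalues = (1 - s) • v0 + s • v1 := by
      funext i
      have hdiagt : star (U : Matrix (Fin n) (Fin n) ℂ) * (A + ((t : ℝ) : ℂ) • B)
          * (U : Matrix (Fin n) (Fin n) ℂ)
          = diagonal (RCLike.ofReal ∘ (hHerm t).eigenvalues) :=
        by simpa [hUdef] using (hHerm t).conjStarAlgAut_star_eigenvectorUnitary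
      have h1 : ((hHerm t).eigenvalues i : ℂ)
          = (star (U : Matrix (Fin n) (Fin n) ℂ) * (A + ((t : ℝ) : ℂ) • B)
            * (U : Matrix (Fin n) (Fin n) ℂ)) i i := by
        rw [hdiagt]
        simp [Matrix.diagonal_apply_eq]
      have h2 : (star (U : Matrix (Fin n) (Fin n) ℂ) * (A + ((t : ℝ) : ℂ) • B)
            * (U : Matrix (Fin n) (Fin n) ℂ))
          = (((1 - s : ℝ) : ℂ)) • (star (U : Matrix (Fin n) (Fin n) ℂ) * (A + ((0 : ℝ) : ℂ) • B)
              * (U : Matrix (Fin n) (Fin n) ℂ))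
            + (((s : ℝ) : ℂ)) • (star (U : Matrix (Fin n) (Fin n) ℂ) * (A + ((T : ℝ) : ℂ) • B)
              * (U : Matrix (Fin n) (Fin n) ℂ)) := by
        rw [hmat]
        simp only [Matrix.mul_add, Matrix.add_mul, Matrix.mul_smul, Matrix.smul_mul]
      have h3 : (hHerm t).eigenvalues i
          = ((star (U : Matrix (Fin n) (Fin n) ℂ) * (A + ((t : ℝ) : ℂ) • B)
            * (U : Matrix (Fin n) (Fin n) ℂ)) i i).re := by
        rw [← h1, Complex.ofReal_re]
      rw [h3, h2]
      simp only [Matrix.add_apply, Matrix.smul_apply, smul_eq_mul, Complex.add_re,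
        Complex.re_ofReal_mul]
      have e0 := congrFun hv0 i
      have e1 := congrFun hv1 i
      rw [e0, e1]
      simp [hv0def, hv1def]
    -- concavity
    have hconc : (1 - s) * f v0 + s * f v1 ≤ g t := by
      have := hconcave.2 hv0mem hv1mem (by linarith : (0:ℝ) ≤ 1 - s) hs0 (by ring)
      simpa [hgdef, hlam, smul_eq_mul] using this
    have hgT : 0 ≤ g T := hnonneg _ (hadm T hT.le)
    have hg0eq : g 0 ≤ f v0 := hfv0
    have hgTle : g T ≤ f v1 := hfv1
    nlinarith [mul_nonneg hs0 hgT, mul_nonneg hs0 (sub_nonneg.mpr hgTle),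
      mul_nonneg (by linarith : (0:ℝ) ≤ 1 - s) (sub_nonneg.mpr hg0eq)]
  -- derivative lower bound for each T
  have key : ∀ T : ℝ, 0 < T → -(g 0) / T ≤ d := by
    intro T hT
    have htend := hasDerivWithinAt_iff_tendsto_slope.mp hderiv
    rw [show Set.Ici (0:ℝ) \ {0} = Set.Ioi 0 from Set.Ici_sdiff_left] at htend
    refine ge_of_tendsto htend ?_
    have hmem : Set.Iio T ∈ nhdsWithin (0 : ℝ) (Set.Ioi (0:ℝ)) :=
      nhdsWithin_le_nhds (Iio_mem_nhds hT)
    filter_upwards [hmem, self_mem_nhdsWithin] with t htlt htpos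
    have htpos' : 0 < t := Set.mem_Ioi.mp htpos
    have hineq := hmain T hT t htpos' (le_of_lt (Set.mem_Iio.mp htlt))
    rw [slope_def_field]
    rw [div_le_div_iff₀ hT (by linarith : (0:ℝ) < t - 0)]
    have hdiv : t / T * T = t := div_mul_cancel₀ t hT.ne'
    nlinarith
  -- conclude
  by_contra hcon
  push_neg at hcon
  set T : ℝ := (g 0 + 1) / (-d) with hTdef
  have hTpos : 0 < T := div_pos (by linarith) (by linarith)
  have h1 := key T hTpos
  have h2 : -(g 0) ≤ d * T := (div_le_iff₀ hTpos).mp h1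
  have hd : d ≠ 0 := ne_of_lt hcon
  have hne : -d ≠ 0 := ne_of_gt (by linarith)
  have h3 : d * T = -(g 0 + 1) := by
    rw [hTdef]
    calc d * ((g 0 + 1) / -d) = -((g 0 + 1) / -d * -d) := by ring
      _ = -(g 0 + 1) := by rw [div_mul_cancel₀ _ hne]
  linarith
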